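/- Let G be a graph and H an attachment set of even size h. Then η(altan(G,H)) ≤ η(G) + 2. -/

import Mathlib

open scoped Classical

/-- The nullity of a graph: dimension of the kernel of its real adjacency matrix. -/
noncomputable def nullity {V : Type*} [Fintype V] (G : SimpleGraph V) : ℕ :=
  letI := Classical.decEq V
  letI := Classical.decRel G.Adj
  Module.finrank ℝ ↥(LinearMap.ker (Matrix.toLin' (G.adjMatrix ℝ)))

/-- `q` is a kernel eigenvector of `G`: the sum of `q` over each neighbourhood is `0`. -/
def IsKernelVector {V : Type*} [Fintype V] (G : SimpleGraph V) (q : V → ℝ) : Prop :=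
  ∀ v : V, ∑ u : V, (if G.Adj v u then q u else 0) = 0

/-- Underlying relation of the altan construction: vertices are `V ⊕ (Fin h ⊕ Fin h)`,
where `Sum.inr (Sum.inl i)` is `x_{i+1}` and `Sum.inr (Sum.inr i)` is `y_{i+1}`
(0-indexed versions of the 1-indexed `x_i, y_i`). -/
def altanRel {V : Type*} {h : ℕ} [NeZero h] (G : SimpleGraph V) (H : Fin h → V) :
    (V ⊕ (Fin h ⊕ Fin h)) → (V ⊕ (Fin h ⊕ Fin h)) → Prop
  | Sum.inl u, Sum.inl w => G.Adj u w
  | Sum.inl u, Sum.inr (Sum.inl i) => u = H i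
  | Sum.inr (Sum.inl i), Sum.inr (Sum.inr j) => j = i ∨ i = j + 1
  | _, _ => False

/-- The altan of `(G, H)`. -/
def altan {V : Type*} {h : ℕ} [NeZero h] (G : SimpleGraph V) (H : Fin h → V) :
    SimpleGraph (V ⊕ (Fin h ⊕ Fin h)) :=
  SimpleGraph.fromRel (altanRel G H)

/-- The special vector: `s(y_i) = (-1)^i` (1-indexed), `0` elsewhere. -/
def specialVector (V : Type*) (h : ℕ) : (V ⊕ (Fin h ⊕ Fin h)) → ℝ
  | Sum.inr (Sum.inr j) => (-1 : ℝ) ^ ((j : ℕ) + 1)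
  | _ => 0

/-- The induced attachment set `H' = (y_1, ..., y_h)` of the altan. -/
def inducedAttachment (V : Type*) (h : ℕ) : Fin h → (V ⊕ (Fin h ⊕ Fin h)) :=
  fun i => Sum.inr (Sum.inr i)

section Aux

set_option linter.unusedSectionVars false

variable {V : Type*} [Fintype V] {h : ℕ} [NeZero h] (G : SimpleGraph V) (H : Fin h → V)

lemma nullity_eq (G : SimpleGraph V) [DecidableEq V] [DecidableRel G.Adj] :
    nullity G = Module.finrank ℝ ↥(LinearMap.ker (Matrix.toLin' (G.adjMatrix ℝ))) := by
  unfold nullity; congr!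

lemma mem_ker_iff {V : Type*} [Fintype V] (G : SimpleGraph V) [DecidableEq V]
    [DecidableRel G.Adj] (q : V → ℝ) :
    q ∈ LinearMap.ker (Matrix.toLin' (G.adjMatrix ℝ)) ↔
      ∀ v, ∑ u, (if G.Adj v u then q u else 0) = 0 := by
  rw [LinearMap.mem_ker, Matrix.toLin'_apply, funext_iff]
  refine forall_congr' fun v => ?_
  rw [SimpleGraph.adjMatrix_mulVec_apply, SimpleGraph.neighborFinset_eq_filter,
    Finset.sum_filter]
  simp

lemma sum_ite_pair {n : ℕ} (x : Fin n → ℝ) (a b : Fin n) (hab : a ≠ b)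
    (P : Fin n → Prop) (hP : ∀ i, P i ↔ i = a ∨ i = b) :
    ∑ i, (if P i then x i else 0) = x a + x b := by
  have key : ∀ i, (if P i then x i else 0)
      = (if i = a then x i else 0) + (if i = b then x i else 0) := by
    intro i
    by_cases ha : i = a <;> by_cases hb : i = b
    · exact absurd (ha.symm.trans hb) hab
    all_goals simp [hP, ha, hb, hab, hab.symm]
  rw [Finset.sum_congr rfl fun i _ => key i, Finset.sum_add_distrib]
  simp [Finset.sum_ite_eq']

lemma fin_ne_add_one {h : ℕ} [NeZero h] (hh : 2 ≤ h) (a : Fin h) : a ≠ a + 1 := by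
  intro e
  have h1 : (1 : Fin h) = 0 := (left_eq_add.mp e)
  have := Fin.one_eq_zero_iff.mp h1
  omega

lemma fin_ne_sub_one {h : ℕ} [NeZero h] (hh : 2 ≤ h) (a : Fin h) : a ≠ a - 1 := by
  intro e
  have : a + 1 = a := eq_sub_iff_add_eq.mp e
  exact fin_ne_add_one hh a this.symm

lemma altan_adj_ll (v u : V) : (altan G H).Adj (.inl v) (.inl u) ↔ G.Adj v u := by
  simp only [altan, SimpleGraph.fromRel_adj, altanRel]
  constructor
  · rintro ⟨-, hadj | hadj⟩
    · exact hadj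
    · exact hadj.symm
  · intro hadj
    exact ⟨fun e => hadj.ne (Sum.inl.inj e), Or.inl hadj⟩

lemma altan_adj_xl (i : Fin h) (v : V) :
    (altan G H).Adj (.inr (.inl i)) (.inl v) ↔ v = H i := by
  simp [altan, SimpleGraph.fromRel_adj, altanRel]

lemma altan_adj_xx (i i' : Fin h) : ¬ (altan G H).Adj (.inr (.inl i)) (.inr (.inl i')) := by
  simp [altan, SimpleGraph.fromRel_adj, altanRel]

lemma altan_adj_xy (i j : Fin h) :
    (altan G H).Adj (.inr (.inl i)) (.inr (.inr j)) ↔ (j = i ∨ i = j + 1) := by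
  simp [altan, SimpleGraph.fromRel_adj, altanRel]

lemma altan_adj_yl (j : Fin h) (v : V) : ¬ (altan G H).Adj (.inr (.inr j)) (.inl v) := by
  simp [altan, SimpleGraph.fromRel_adj, altanRel]

lemma altan_adj_yy (j j' : Fin h) : ¬ (altan G H).Adj (.inr (.inr j)) (.inr (.inr j')) := by
  simp [altan, SimpleGraph.fromRel_adj, altanRel]

lemma altan_adj_lx (v : V) (i : Fin h) :
    (altan G H).Adj (.inl v) (.inr (.inl i)) ↔ v = H i := by
  rw [SimpleGraph.adj_comm]; exact altan_adj_xl G H i v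

lemma altan_adj_ly (v : V) (j : Fin h) : ¬ (altan G H).Adj (.inl v) (.inr (.inr j)) := by
  rw [SimpleGraph.adj_comm]; exact altan_adj_yl G H j v

lemma altan_adj_yx (j i : Fin h) :
    (altan G H).Adj (.inr (.inr j)) (.inr (.inl i)) ↔ (j = i ∨ i = j + 1) := by
  rw [SimpleGraph.adj_comm]; exact altan_adj_xy G H i j

open Fin.NatCast in
/-- The core combinatorial lemma: a kernel vector of the altan that vanishes at `x_0` and
`y_{-1}` restricts to a kernel vector of `G`, and is identically `0` if it vanishes on `V`. -/
lemma altan_core (hh : 2 ≤ h) (q : V ⊕ (Fin h ⊕ Fin h) → ℝ)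
    (hker : ∀ w, ∑ u, (if (altan G H).Adj w u then q u else 0) = 0)
    (hx0 : q (Sum.inr (Sum.inl 0)) = 0)
    (hyl : q (Sum.inr (Sum.inr (-1))) = 0) :
    (∀ v, ∑ u, (if G.Adj v u then q (Sum.inl u) else 0) = 0) ∧
    ((∀ v, q (Sum.inl v) = 0) → q = 0) := by
  -- equation at y_j
  have eqY : ∀ j : Fin h, q (Sum.inr (Sum.inl j)) + q (Sum.inr (Sum.inl (j + 1))) = 0 := by
    intro j
    have hs := hker (Sum.inr (Sum.inr j))
    rw [Fintype.sum_sum_type, Fintype.sum_sum_type] at hs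
    simp only [altan_adj_yl, altan_adj_yy, altan_adj_yx, if_false,
      Finset.sum_const_zero, zero_add, add_zero] at hs
    have key := sum_ite_pair (fun i => q (Sum.inr (Sum.inl i))) j (j + 1)
      (fin_ne_add_one hh j) (fun i => j = i ∨ i = j + 1)
      (fun i => or_congr eq_comm Iff.rfl)
    rw [← key]
    convert hs
  -- equation at x_i
  have eqX : ∀ i : Fin h, q (Sum.inl (H i))
      + (q (Sum.inr (Sum.inr i)) + q (Sum.inr (Sum.inr (i - 1)))) = 0 := by
    intro i
    have hs := hker (Sum.inr (Sum.inl i))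
    rw [Fintype.sum_sum_type, Fintype.sum_sum_type] at hs
    simp only [altan_adj_xl, altan_adj_xx, altan_adj_xy, if_false,
      Finset.sum_const_zero, zero_add, add_zero] at hs
    rw [Finset.sum_ite_eq' Finset.univ (H i) (fun v => q (Sum.inl v))] at hs
    simp only [Finset.mem_univ, if_true] at hs
    have key := sum_ite_pair (fun j => q (Sum.inr (Sum.inr j))) i (i - 1)
      (fin_ne_sub_one hh i) (fun j => j = i ∨ i = j + 1)
      (fun j => or_congr Iff.rfl (by rw [eq_sub_iff_add_eq, eq_comm (a := i)]))
    rw [← key]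
    convert hs
  -- equation at v
  have eqV : ∀ v, (∑ u, (if G.Adj v u then q (Sum.inl u) else 0)) +
      (∑ i, (if v = H i then q (Sum.inr (Sum.inl i)) else 0)) = 0 := by
    intro v
    have hs := hker (Sum.inl v)
    rw [Fintype.sum_sum_type, Fintype.sum_sum_type] at hs
    simpa only [altan_adj_ll, altan_adj_lx, altan_adj_ly, if_false,
      Finset.sum_const_zero, add_zero] using hs
  -- all x_i vanish
  have xzero : ∀ i, q (Sum.inr (Sum.inl i)) = 0 := by
    have hn : ∀ n : ℕ, q (Sum.inr (Sum.inl (n : Fin h))) = 0 := by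
      intro n
      induction n with
      | zero => simpa using hx0
      | succ n ih =>
        have := eqY (n : Fin h)
        push_cast
        linarith
    intro i
    have := hn i.val
    rwa [Fin.cast_val_eq_self] at this
  constructor
  · intro v
    have := eqV v
    have hz : (∑ i, (if v = H i then q (Sum.inr (Sum.inl i)) else 0)) = 0 := by
      apply Finset.sum_eq_zero
      intro i _
      rw [xzero i]
      simp
    linarith
  · intro hv
    have yzero : ∀ j, q (Sum.inr (Sum.inr j)) = 0 := by
      have h0 : q (Sum.inr (Sum.inr (0 : Fin h))) = 0 := by
        have := eqX 0
        rw [hv (H 0)] at this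
        rw [show (0 : Fin h) - 1 = -1 from zero_sub 1] at this
        linarith [hyl]
      have hn : ∀ n : ℕ, q (Sum.inr (Sum.inr (n : Fin h))) = 0 := by
        intro n
        induction n with
        | zero => simpa using h0
        | succ n ih =>
          have := eqX ((n : Fin h) + 1)
          rw [hv (H ((n : Fin h) + 1)), add_sub_cancel_right, ih] at this
          push_cast
          linarith
      intro j
      have := hn j.val
      rwa [Fin.cast_val_eq_self] at this
    funext w
    rcases w with v | (i | j)
    · exact hv v
    · exact xzero i
    · exact yzero j

end Aux

set_option maxHeartbeats 1000000 in
set_option synthInstance.maxHeartbeats 400000 in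
/-- for even attachment size, the nullity of the altan is at most η(G) + 2. -/
theorem stmt3 {V : Type*} [Fintype V] {h : ℕ} [NeZero h] (hh : 2 ≤ h) (heven : Even h)
    (G : SimpleGraph V) (H : Fin h → V) :
    nullity (altan G H) ≤ nullity G + 2 := by
  classical
  set K : Submodule ℝ ((V ⊕ (Fin h ⊕ Fin h)) → ℝ) :=
    LinearMap.ker (Matrix.toLin' ((altan G H).adjMatrix ℝ)) with hK
  set π : ↥K →ₗ[ℝ] ℝ × ℝ :=
    (LinearMap.prod (LinearMap.proj (Sum.inr (Sum.inl (0 : Fin h))))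
      (LinearMap.proj (Sum.inr (Sum.inr (-1 : Fin h))))).comp K.subtype with hπ
  have hrank : Module.finrank ℝ ↥K
      = Module.finrank ℝ ↥(LinearMap.range π) + Module.finrank ℝ ↥(LinearMap.ker π) :=
    (LinearMap.finrank_range_add_finrank_ker π).symm
  have h2 : Module.finrank ℝ ↥(LinearMap.range π) ≤ 2 :=
    le_trans (Submodule.finrank_le _) (by simp)
  -- facts about elements of ker π
  have hfacts : ∀ p : ↥(LinearMap.ker π),
      (∀ v, ∑ u, (if G.Adj v u then (p : (V ⊕ (Fin h ⊕ Fin h)) → ℝ) (Sum.inl u) else 0) = 0)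
      ∧ ((∀ v, (p : (V ⊕ (Fin h ⊕ Fin h)) → ℝ) (Sum.inl v) = 0)
          → (p : (V ⊕ (Fin h ⊕ Fin h)) → ℝ) = 0) := by
    intro p
    have hmemK : ((p : ↥K) : (V ⊕ (Fin h ⊕ Fin h)) → ℝ) ∈ K := (p : ↥K).2
    have hker := (mem_ker_iff (altan G H) _).mp hmemK
    have hp2 : π (p : ↥K) = 0 := p.2
    have hx0 : ((p : ↥K) : (V ⊕ (Fin h ⊕ Fin h)) → ℝ) (Sum.inr (Sum.inl (0 : Fin h))) = 0 :=
      congrArg Prod.fst hp2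
    have hyl : ((p : ↥K) : (V ⊕ (Fin h ⊕ Fin h)) → ℝ) (Sum.inr (Sum.inr (-1 : Fin h))) = 0 :=
      congrArg Prod.snd hp2
    exact altan_core G H hh _ hker hx0 hyl
  -- the restriction map into ker(A_G)
  let r : ↥(LinearMap.ker π) →ₗ[ℝ] (V → ℝ) :=
    (LinearMap.funLeft ℝ ℝ Sum.inl).comp (K.subtype.comp (LinearMap.ker π).subtype)
  have hmem : ∀ p : ↥(LinearMap.ker π),
      r p ∈ LinearMap.ker (Matrix.toLin' (G.adjMatrix ℝ)) := by
    intro p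
    rw [mem_ker_iff]
    exact (hfacts p).1
  let ρ : ↥(LinearMap.ker π) →ₗ[ℝ] ↥(LinearMap.ker (Matrix.toLin' (G.adjMatrix ℝ))) :=
    LinearMap.codRestrict _ r hmem
  have hkerρ : LinearMap.ker ρ = ⊥ := by
    rw [Submodule.eq_bot_iff]
    intro p hp
    rw [LinearMap.mem_ker] at hp
    have hr : r p = 0 := congrArg Subtype.val hp
    have hv : ∀ v, (p : (V ⊕ (Fin h ⊕ Fin h)) → ℝ) (Sum.inl v) = 0 := fun v =>
      congrFun hr v
    have hq0 : ((p : ↥K) : (V ⊕ (Fin h ⊕ Fin h)) → ℝ) = 0 := (hfacts p).2 hv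
    exact Subtype.ext (Subtype.ext hq0)
  have hinj : Function.Injective ρ := by
    intro a b hab
    have hab' : a - b ∈ LinearMap.ker ρ := by
      rw [LinearMap.mem_ker]
      exact (LinearMap.map_sub ρ a b).trans (by rw [hab, sub_self])
    rw [hkerρ, Submodule.mem_bot] at hab'
    exact sub_eq_zero.mp hab'
  have h1 : Module.finrank ℝ ↥(LinearMap.ker π)
      ≤ Module.finrank ℝ ↥(LinearMap.ker (Matrix.toLin' (G.adjMatrix ℝ))) :=
    LinearMap.finrank_le_finrank_of_injective hinj
  rw [nullity_eq (altan G H), nullity_eq G]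
  calc Module.finrank ℝ ↥K
      = Module.finrank ℝ ↥(LinearMap.range π) + Module.finrank ℝ ↥(LinearMap.ker π) := hrank
    _ ≤ 2 + Module.finrank ℝ ↥(LinearMap.ker (Matrix.toLin' (G.adjMatrix ℝ))) :=
        Nat.add_le_add h2 h1
    _ = Module.finrank ℝ ↥(LinearMap.ker (Matrix.toLin' (G.adjMatrix ℝ))) + 2 := Nat.add_comm _ _
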